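/- arXiv:1601.01950 — 3 statements merged into one kernel-verified Lean document; each statement's English description precedes it below -/
import Mathlib

section
/- Let T be a finite tree with degree sequence d_1, …, d_n. Then the number Y(T) of 5-vertex wye subtrees of T satisfies Y(T) ≤ 2·Σ_{v=1}^{n} d_v^{2+√3}. -/
open SimpleGraph Finset

/-- Number of subtrees (connected subgraphs, which in a tree are induced) of `G`
isomorphic to the pattern graph `H`. -/
noncomputable def copyCount {V : Type*} [Fintype V] {k : ℕ} (G : SimpleGraph V)
    (H : SimpleGraph (Fin k)) : ℕ :=
  Nat.card {s : Finset V // Nonempty (G.induce (s : Set V) ≃g H)}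

/-- The star `K_{1,4}` on 5 vertices, centered at `0`. -/
def starGraph5 : SimpleGraph (Fin 5) := SimpleGraph.fromRel (fun a _ => a = 0)

/-- The wye: a degree-3 vertex `0` with two leaves `1, 2` and a pendant path `0-3-4`. -/
def wyeGraph : SimpleGraph (Fin 5) :=
  SimpleGraph.fromEdgeSet {s(0, 1), s(0, 2), s(0, 3), s(3, 4)}

/- ### Auxiliary lemmas -/

lemma wye_adj_aux : wyeGraph.Adj 0 1 ∧ wyeGraph.Adj 0 2 ∧ wyeGraph.Adj 0 3 ∧ wyeGraph.Adj 3 4 := by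
  refine ⟨?_, ?_, ?_, ?_⟩ <;>
  · rw [wyeGraph, SimpleGraph.fromEdgeSet_adj]
    constructor
    · simp only [Set.mem_insert_iff, Set.mem_singleton_iff]
      decide
    · decide

lemma rpow_key_aux {x y : ℝ} (hx : 1 ≤ x) (hy : 1 ≤ y) :
    x^2 * y + y^2 * x ≤ 2 * x ^ (2 + Real.sqrt 3) + 2 * y ^ (1 + Real.sqrt 3) := by
  have x0 : (0:ℝ) < x := by linarith
  have y0 : (0:ℝ) < y := by linarith
  set s : ℝ := Real.sqrt 3 with hs
  have hs2 : s * s = 3 := Real.mul_self_sqrt (by norm_num)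
  have hsnn : 0 ≤ s := Real.sqrt_nonneg 3
  have hs1 : 1 ≤ s := by nlinarith
  have hsle : s ≤ 2 := by nlinarith
  have hx2 : x ^ 2 = x ^ ((2:ℝ)) := by
    rw [← Real.rpow_natCast x 2]; norm_num
  have hy2 : y ^ 2 = y ^ ((2:ℝ)) := by
    rw [← Real.rpow_natCast y 2]; norm_num
  have hxp : (0:ℝ) ≤ x ^ (2 + s) := by positivity
  have hyp : (0:ℝ) ≤ y ^ (1 + s) := by positivity
  rcases le_or_gt y (x ^ ((1+s)/2)) with hc | hc
  · have h1 : x^2 * y ≤ x ^ (2+s) := by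
      calc x^2*y ≤ x^2 * x ^ ((1+s)/2) := by
            apply mul_le_mul_of_nonneg_left hc (by positivity)
        _ = x ^ ((2:ℝ) + (1+s)/2) := by rw [hx2, ← Real.rpow_add x0]
        _ ≤ x ^ (2+s) := Real.rpow_le_rpow_of_exponent_le hx (by nlinarith)
    have h2 : y^2 * x ≤ x ^ (2+s) := by
      have hb : y^2 ≤ x ^ ((1:ℝ)+s) := by
        calc y^2 = y ^ ((2:ℝ)) := hy2
          _ ≤ (x ^ ((1+s)/2)) ^ ((2:ℝ)) := Real.rpow_le_rpow y0.le hc (by norm_num)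
          _ = x ^ ((1:ℝ)+s) := by
              rw [← Real.rpow_mul x0.le]; ring_nf
      calc y^2 * x ≤ x ^ ((1:ℝ)+s) * x := by
            apply mul_le_mul_of_nonneg_right hb x0.le
        _ = x ^ (2+s) := by
            nth_rewrite 2 [← Real.rpow_one x]
            rw [← Real.rpow_add x0]; ring_nf
    linarith
  · have hxle : x ≤ y ^ (s-1) := by
      have hexp : ((1+s)/2)*(s-1) = 1 := by field_simp; nlinarith
      calc x = (x ^ ((1+s)/2)) ^ (s-1) := by
            rw [← Real.rpow_mul x0.le, hexp, Real.rpow_one]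
        _ ≤ y ^ (s-1) := Real.rpow_le_rpow (by positivity) hc.le (by linarith)
    have h1 : x^2 * y ≤ y ^ (1+s) := by
      calc x^2 * y ≤ (y ^ (s-1))^2 * y := by
            apply mul_le_mul_of_nonneg_right (by nlinarith [sq_nonneg (y^(s-1))]) y0.le
        _ = y ^ ((s-1)*2 + 1) := by
            rw [← Real.rpow_natCast (y ^ (s-1)) 2, ← Real.rpow_mul y0.le,
              Real.rpow_add y0 ((s-1)*2) 1, Real.rpow_one]
            norm_num
        _ ≤ y ^ (1+s) := Real.rpow_le_rpow_of_exponent_le hy (by nlinarith)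
    have h2 : y^2 * x ≤ y ^ (1+s) := by
      calc y^2 * x ≤ y^2 * y ^ (s-1) := by
            apply mul_le_mul_of_nonneg_left hxle (by positivity)
        _ = y ^ ((2:ℝ) + (s-1)) := by rw [hy2, ← Real.rpow_add y0]
        _ ≤ y ^ (1+s) := Real.rpow_le_rpow_of_exponent_le hy (by nlinarith)
    linarith

lemma mul_rpow_succ_aux {x : ℝ} (hx : 0 ≤ x) :
    x * x ^ (1 + Real.sqrt 3) ≤ x ^ (2 + Real.sqrt 3) := by
  rcases eq_or_lt_of_le hx with h | h
  · rw [← h, Real.zero_rpow (by positivity : (2:ℝ) + Real.sqrt 3 ≠ 0)]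
    simp
  · nth_rewrite 1 [← Real.rpow_one x]
    rw [← Real.rpow_add h]
    apply le_of_eq
    ring_nf

lemma exists_parent_aux {V : Type*} {G : SimpleGraph V} (hG : G.IsTree) (r : V) {v : V}
    (hv : v ≠ r) : ∃ u, G.Adj v u ∧ G.dist r u < G.dist r v := by
  have hpos : 0 < G.dist r v := hG.isConnected.pos_dist_of_ne (Ne.symm hv)
  obtain ⟨p, hlen⟩ := hG.isConnected.exists_walk_length_eq_dist r v
  obtain ⟨u, hadj, q, hq⟩ := SimpleGraph.Walk.exists_eq_cons_of_ne hv p.reverse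
  refine ⟨u, hadj, ?_⟩
  have h1 : G.dist u r ≤ q.length := SimpleGraph.dist_le q
  have h2 : p.reverse.length = G.dist r v := by
    rw [SimpleGraph.Walk.length_reverse, hlen]
  rw [hq, SimpleGraph.Walk.length_cons] at h2
  rw [SimpleGraph.dist_comm]
  omega

lemma parent_unique_aux {V : Type*} [DecidableEq V] {G : SimpleGraph V} (hG : G.IsTree)
    (r : V) {c v v' : V} (h1 : G.Adj v c) (h2 : G.Adj v' c)
    (hd1 : G.dist r v ≤ G.dist r c) (hd2 : G.dist r v' ≤ G.dist r c) : v = v' := by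
  obtain ⟨p, hp, hlen⟩ := hG.isConnected.exists_path_of_dist r v
  obtain ⟨p', hp', hlen'⟩ := hG.isConnected.exists_path_of_dist r v'
  have hns : ∀ {w : V} (q : G.Walk r w), q.IsPath → q.length = G.dist r w →
      G.Adj w c → G.dist r w ≤ G.dist r c → c ∉ q.support := by
    intro w q _ hql hadj hdw hmem
    have l1 : G.dist r c ≤ (q.takeUntil c hmem).length := SimpleGraph.dist_le _
    have l2 : (q.takeUntil c hmem).length + (q.dropUntil c hmem).length = q.length := by
      rw [← SimpleGraph.Walk.length_append, SimpleGraph.Walk.take_spec]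
    have l3 : (q.takeUntil c hmem).length ≤ q.length :=
      SimpleGraph.Walk.length_takeUntil_le q hmem
    have l4 : (q.dropUntil c hmem).length = 0 := by omega
    have : c = w := SimpleGraph.Walk.eq_of_length_eq_zero l4
    subst this
    exact G.irrefl hadj
  have hQ : (SimpleGraph.Walk.cons h1.symm p.reverse).IsPath := by
    rw [SimpleGraph.Walk.cons_isPath_iff]
    refine ⟨hp.reverse, ?_⟩
    rw [SimpleGraph.Walk.support_reverse, List.mem_reverse]
    exact hns p hp hlen h1 hd1
  have hQ' : (SimpleGraph.Walk.cons h2.symm p'.reverse).IsPath := by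
    rw [SimpleGraph.Walk.cons_isPath_iff]
    refine ⟨hp'.reverse, ?_⟩
    rw [SimpleGraph.Walk.support_reverse, List.mem_reverse]
    exact hns p' hp' hlen' h2 hd2
  have heq := hG.IsAcyclic.path_unique ⟨_, hQ⟩ ⟨_, hQ'⟩
  have heq' : SimpleGraph.Walk.cons h1.symm p.reverse
      = SimpleGraph.Walk.cons h2.symm p'.reverse := congrArg Subtype.val heq
  injection heq'

lemma sum_ite_and_aux {α : Type*} [Fintype α] (p : Prop) [Decidable p] (q : α → Prop)
    [DecidablePred q] (f : α → ℕ) :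
    ∑ x, ite (p ∧ q x) (f x) 0 = ite p (∑ x, ite (q x) (f x) 0) 0 := by
  by_cases hp : p <;> simp [hp]

lemma deg_sum_eval_aux {V : Type*} [Fintype V] {G : SimpleGraph V} [DecidableRel G.Adj]
    (a : V) : ∑ x, ite (G.Adj a x) 1 0 = G.degree a := by
  rw [← SimpleGraph.card_neighborFinset_eq_degree, SimpleGraph.neighborFinset_eq_filter,
    Finset.card_filter]

lemma deg_sum_eval_const_aux {V : Type*} [Fintype V] {G : SimpleGraph V} [DecidableRel G.Adj]
    (a : V) (K : ℕ) : ∑ x, ite (G.Adj a x) K 0 = G.degree a * K := by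
  have h : ∑ x, ite (G.Adj a x) K 0 = ∑ x, (ite (G.Adj a x) 1 0) * K := by
    apply Finset.sum_congr rfl; intro x _; by_cases h : G.Adj a x <;> simp [h]
  rw [h, ← Finset.sum_mul, deg_sum_eval_aux]

lemma T_card_eq_aux {V : Type*} [Fintype V] {G : SimpleGraph V} [DecidableRel G.Adj] :
    ((univ : Finset (V × V × V × V × V)).filter (fun t =>
      ((G.Adj t.1 t.2.1 ∧ G.Adj t.1 t.2.2.1) ∧ G.Adj t.1 t.2.2.2.1) ∧
        G.Adj t.2.2.2.1 t.2.2.2.2)).card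
    = ∑ q ∈ univ.filter (fun q : V × V => G.Adj q.1 q.2), (G.degree q.1)^2 * G.degree q.2 := by
  rw [Finset.card_filter, Finset.sum_filter]
  simp only [Fintype.sum_prod_type]
  apply Finset.sum_congr rfl
  intro a _
  have inner3 : ∀ b c u : V, ∑ e : V, ite ((((G.Adj a b ∧ G.Adj a c) ∧ G.Adj a u) ∧
        G.Adj u e)) 1 0 = ite ((G.Adj a b ∧ G.Adj a c) ∧ G.Adj a u) (G.degree u) 0 := by
    intro b c u
    rw [sum_ite_and_aux ((G.Adj a b ∧ G.Adj a c) ∧ G.Adj a u) (G.Adj u) (fun _ => 1),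
      deg_sum_eval_aux]
  have inner2 : ∀ b c : V, ∑ u : V, ∑ e : V, ite ((((G.Adj a b ∧ G.Adj a c) ∧ G.Adj a u) ∧
        G.Adj u e)) 1 0
      = ite (G.Adj a b ∧ G.Adj a c) (∑ u, ite (G.Adj a u) (G.degree u) 0) 0 := by
    intro b c
    rw [Finset.sum_congr rfl (fun u _ => inner3 b c u)]
    exact sum_ite_and_aux (G.Adj a b ∧ G.Adj a c) (G.Adj a) (fun u => G.degree u)
  have inner1 : ∀ b : V, ∑ c : V, ∑ u : V, ∑ e : V,
        ite ((((G.Adj a b ∧ G.Adj a c) ∧ G.Adj a u) ∧ G.Adj u e)) 1 0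
      = ite (G.Adj a b) (G.degree a * ∑ u, ite (G.Adj a u) (G.degree u) 0) 0 := by
    intro b
    rw [Finset.sum_congr rfl (fun c _ => inner2 b c)]
    rw [sum_ite_and_aux (G.Adj a b) (G.Adj a) (fun _ => ∑ u, ite (G.Adj a u) (G.degree u) 0)]
    rw [deg_sum_eval_const_aux]
  rw [Finset.sum_congr rfl (fun b _ => inner1 b)]
  rw [deg_sum_eval_const_aux a (G.degree a * ∑ u, ite (G.Adj a u) (G.degree u) 0)]
  rw [show ∀ K : ℕ, G.degree a * (G.degree a * K) = (G.degree a)^2 * K from fun K => by ring]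
  rw [Finset.mul_sum]
  apply Finset.sum_congr rfl
  intro u _
  by_cases h : G.Adj a u <;> simp [h]

lemma pair_sum_le_aux {V : Type*} [Fintype V] [DecidableEq V] {G : SimpleGraph V}
    (hG : G.IsTree) [DecidableRel G.Adj] (r : V) :
    ∑ q ∈ univ.filter (fun q : V × V => G.Adj q.1 q.2),
        ((G.degree q.1 : ℝ))^2 * (G.degree q.2 : ℝ)
      ≤ 4 * ∑ v, (G.degree v : ℝ) ^ (2 + Real.sqrt 3) := by
  classical
  set s : ℝ := Real.sqrt 3 with hsdef
  set P : Finset (V × V) := univ.filter (fun q : V × V => G.Adj q.1 q.2) with hP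
  set par : V → V := fun v => if h : v = r then v else
    Classical.choose (exists_parent_aux hG r h) with hpardef
  have hpar : ∀ v, v ≠ r → G.Adj v (par v) ∧ G.dist r (par v) < G.dist r v := by
    intro v hv
    simp only [hpardef, dif_neg hv]
    exact Classical.choose_spec (exists_parent_aux hG r hv)
  set ρ : V × V → V × Bool := fun q =>
    if G.dist r q.2 < G.dist r q.1 then (q.1, true) else (q.2, false) with hρdef
  have hchar : ∀ q ∈ P, (ρ q = (q.1, true) ∧ q.1 ≠ r ∧ q.2 = par q.1)
      ∨ (ρ q = (q.2, false) ∧ q.2 ≠ r ∧ q.1 = par q.2) := by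
    intro q hq
    have hadj : G.Adj q.1 q.2 := by simpa [hP] using hq
    by_cases h : G.dist r q.2 < G.dist r q.1
    · left
      have h1r : q.1 ≠ r := by
        intro he
        rw [he, SimpleGraph.dist_self] at h
        omega
      have hp1 := hpar q.1 h1r
      refine ⟨by simp [hρdef, if_pos h], h1r, ?_⟩
      exact parent_unique_aux hG r hadj.symm hp1.1.symm h.le hp1.2.le
    · right
      push_neg at h
      have h2r : q.2 ≠ r := by
        intro he
        rw [he] at hadj h
        rw [SimpleGraph.dist_self] at h
        have h0 : G.dist r q.1 = 0 := by omega
        rw [hG.isConnected.dist_eq_zero_iff] at h0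
        rw [← h0] at hadj
        exact G.irrefl hadj
      have hp2 := hpar q.2 h2r
      refine ⟨by simp [hρdef, if_neg (not_lt.mpr h)], h2r, ?_⟩
      exact parent_unique_aux hG r hadj hp2.1.symm h hp2.2.le
  set h : V × Bool → ℝ := fun y =>
    if y.2 then (G.degree y.1 : ℝ)^2 * (G.degree (par y.1) : ℝ)
    else (G.degree (par y.1) : ℝ)^2 * (G.degree y.1 : ℝ) with hhdef
  have hcomp : ∀ q ∈ P, ((G.degree q.1 : ℝ))^2 * (G.degree q.2 : ℝ) = h (ρ q) := by
    intro q hq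
    rcases hchar q hq with ⟨he, _, hpq⟩ | ⟨he, _, hpq⟩ <;>
      rw [he, hpq] <;> simp [hhdef]
  have hinj : ∀ q ∈ P, ∀ q' ∈ P, ρ q = ρ q' → q = q' := by
    intro q hq q' hq' he
    rcases hchar q hq with ⟨he1, _, hp1⟩ | ⟨he1, _, hp1⟩ <;>
      rcases hchar q' hq' with ⟨he2, _, hp2⟩ | ⟨he2, _, hp2⟩ <;>
      rw [he1, he2] at he <;>
      [skip; exact absurd (congrArg Prod.snd he) (by simp);
       exact absurd (congrArg Prod.snd he) (by simp); skip] <;>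
      · have h1 := congrArg Prod.fst he
        simp only at h1
        apply Prod.ext <;> simp_all
  have hnn : ∀ y ∈ (univ.erase r) ×ˢ (univ : Finset Bool), 0 ≤ h y := by
    intro y _
    rcases y with ⟨c, b⟩
    cases b <;> simp [hhdef] <;> positivity
  calc ∑ q ∈ P, ((G.degree q.1 : ℝ))^2 * (G.degree q.2 : ℝ)
      = ∑ q ∈ P, h (ρ q) := Finset.sum_congr rfl hcomp
    _ = ∑ y ∈ P.image ρ, h y := (Finset.sum_image hinj).symm
    _ ≤ ∑ y ∈ (univ.erase r) ×ˢ (univ : Finset Bool), h y := by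
        apply Finset.sum_le_sum_of_subset_of_nonneg
        · intro y hy
          obtain ⟨q, hq, rfl⟩ := Finset.mem_image.mp hy
          rcases hchar q hq with ⟨he, hne, _⟩ | ⟨he, hne, _⟩ <;>
            rw [he] <;>
            exact Finset.mem_product.mpr ⟨Finset.mem_erase.mpr ⟨hne, mem_univ _⟩, mem_univ _⟩
        · intro y hy _
          exact hnn y hy
    _ = ∑ c ∈ univ.erase r, ((G.degree c : ℝ)^2 * (G.degree (par c) : ℝ)
          + (G.degree (par c) : ℝ)^2 * (G.degree c : ℝ)) := by
        rw [Finset.sum_product]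
        apply Finset.sum_congr rfl
        intro c _
        rw [Fintype.sum_bool]
        simp [hhdef]
    _ ≤ ∑ c ∈ univ.erase r, (2 * (G.degree c : ℝ) ^ (2 + s)
          + 2 * (G.degree (par c) : ℝ) ^ (1 + s)) := by
        apply Finset.sum_le_sum
        intro c hc
        have hcr : c ≠ r := (Finset.mem_erase.mp hc).1
        have hadj := (hpar c hcr).1
        have hd1 : (1:ℝ) ≤ (G.degree c : ℝ) := by
          have : 0 < G.degree c := by
            rw [G.degree_pos_iff_exists_adj]
            exact ⟨_, hadj⟩
          exact_mod_cast this
        have hd2 : (1:ℝ) ≤ (G.degree (par c) : ℝ) := by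
          have : 0 < G.degree (par c) := by
            rw [G.degree_pos_iff_exists_adj]
            exact ⟨_, hadj.symm⟩
          exact_mod_cast this
        exact rpow_key_aux hd1 hd2
    _ = 2 * ∑ c ∈ univ.erase r, (G.degree c : ℝ) ^ (2 + s)
          + 2 * ∑ c ∈ univ.erase r, (G.degree (par c) : ℝ) ^ (1 + s) := by
        rw [Finset.sum_add_distrib, Finset.mul_sum, Finset.mul_sum]
    _ ≤ 2 * ∑ v, (G.degree v : ℝ) ^ (2 + s) + 2 * ∑ v, (G.degree v : ℝ) ^ (2 + s) := by
        have hA : ∑ c ∈ univ.erase r, (G.degree c : ℝ) ^ (2 + s)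
            ≤ ∑ v, (G.degree v : ℝ) ^ (2 + s) := by
          apply Finset.sum_le_sum_of_subset_of_nonneg (Finset.subset_univ _)
          intro v _ _
          positivity
        have hB : ∑ c ∈ univ.erase r, (G.degree (par c) : ℝ) ^ (1 + s)
            ≤ ∑ v, (G.degree v : ℝ) ^ (2 + s) := by
          rw [Finset.sum_comp (fun u => (G.degree u : ℝ) ^ (1 + s)) par]
          have step : ∀ b ∈ (univ.erase r).image par,
              ((univ.erase r).filter (fun c => par c = b)).card • ((G.degree b : ℝ) ^ (1 + s))
                ≤ (G.degree b : ℝ) * (G.degree b : ℝ) ^ (1 + s) := by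
            intro b _
            have hcard : ((univ.erase r).filter (fun c => par c = b)).card ≤ G.degree b := by
              rw [← SimpleGraph.card_neighborFinset_eq_degree]
              apply Finset.card_le_card
              intro c hcmem
              have hc1 := Finset.mem_filter.mp hcmem
              have hcr : c ≠ r := (Finset.mem_erase.mp hc1.1).1
              have := (hpar c hcr).1
              rw [hc1.2] at this
              exact (SimpleGraph.mem_neighborFinset G b c).mpr this.symm
            rw [nsmul_eq_mul]
            apply mul_le_mul_of_nonneg_right _ (by positivity)
            exact_mod_cast hcard
          calc ∑ b ∈ (univ.erase r).image par,
                ((univ.erase r).filter (fun c => par c = b)).card • ((G.degree b : ℝ) ^ (1 + s))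
              ≤ ∑ b ∈ (univ.erase r).image par, (G.degree b : ℝ) * (G.degree b : ℝ) ^ (1 + s) :=
                Finset.sum_le_sum step
            _ ≤ ∑ b, (G.degree b : ℝ) * (G.degree b : ℝ) ^ (1 + s) := by
                apply Finset.sum_le_sum_of_subset_of_nonneg (Finset.subset_univ _)
                intro v _ _
                positivity
            _ ≤ ∑ b, (G.degree b : ℝ) ^ (2 + s) := by
                apply Finset.sum_le_sum
                intro b _
                exact mul_rpow_succ_aux (by positivity)
        linarith
    _ = 4 * ∑ v, (G.degree v : ℝ) ^ (2 + s) := by ring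

theorem wye_le_sum_rpow {V : Type*} [Fintype V] [DecidableEq V] (G : SimpleGraph V)
    [DecidableRel G.Adj] (hG : G.IsTree) :
    (_root_.copyCount G wyeGraph : ℝ) ≤ 2 * ∑ v, (G.degree v : ℝ) ^ (2 + Real.sqrt 3) := by
  classical
  obtain ⟨r⟩ := hG.isConnected.nonempty
  set ι : V → ℕ := fun v => ((Fintype.equivFin V) v : ℕ) with hιdef
  have hιinj : Function.Injective ι :=
    Fin.val_injective.comp (Fintype.equivFin V).injective
  set T : Finset (V × V × V × V × V) := univ.filter (fun t =>
      ((G.Adj t.1 t.2.1 ∧ G.Adj t.1 t.2.2.1) ∧ G.Adj t.1 t.2.2.2.1) ∧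
        G.Adj t.2.2.2.1 t.2.2.2.2) with hT
  set S : Finset (V × V × V × V × V) := univ.filter (fun t =>
      (((G.Adj t.1 t.2.1 ∧ G.Adj t.1 t.2.2.1) ∧ G.Adj t.1 t.2.2.2.1) ∧
        G.Adj t.2.2.2.1 t.2.2.2.2) ∧ ι t.2.1 < ι t.2.2.1) with hS
  -- Step A : every wye copy gives an element of S, injectively
  have hkey : ∀ s : Finset V, Nonempty (G.induce (s : Set V) ≃g wyeGraph) →
      ∃ t : V × V × V × V × V, t ∈ S ∧
        ({t.1, t.2.1, t.2.2.1, t.2.2.2.1, t.2.2.2.2} : Finset V) = s := by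
    intro s hne
    obtain ⟨ψ⟩ := hne
    set φ := ψ.symm with hφ
    set w : Fin 5 → V := fun i => ((φ i : (s : Set V)) : V) with hw
    have hwmem : ∀ i, w i ∈ s := fun i => (φ i).2
    have hadj : ∀ i j : Fin 5, wyeGraph.Adj i j → G.Adj (w i) (w j) := by
      intro i j hij
      exact φ.map_adj_iff.mpr hij
    have winj : Function.Injective w := by
      intro i j hij
      exact φ.injective (Subtype.ext hij)
    have hset1 : ({w 0, w 1, w 2, w 3, w 4} : Finset V) = s := by
      apply Finset.Subset.antisymm
      · intro z hz
        simp only [Finset.mem_insert, Finset.mem_singleton] at hz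
        rcases hz with rfl | rfl | rfl | rfl | rfl <;> exact hwmem _
      · intro z hz
        have hex : ∃ i, w i = z := by
          refine ⟨φ.symm ⟨z, Finset.mem_coe.mpr hz⟩, ?_⟩
          show ((φ (φ.symm ⟨z, _⟩) : (s : Set V)) : V) = z
          rw [RelIso.apply_symm_apply]
        obtain ⟨i, rfl⟩ := hex
        fin_cases i <;> simp
    have hset2 : ({w 0, w 2, w 1, w 3, w 4} : Finset V) = s := by
      rw [Finset.insert_comm (w 2) (w 1)]
      exact hset1
    obtain ⟨h01, h02, h03, h34⟩ := wye_adj_aux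
    have a01 : G.Adj (w 0) (w 1) := hadj 0 1 h01
    have a02 : G.Adj (w 0) (w 2) := hadj 0 2 h02
    have a03 : G.Adj (w 0) (w 3) := hadj 0 3 h03
    have a34 : G.Adj (w 3) (w 4) := hadj 3 4 h34
    by_cases hbc : ι (w 1) < ι (w 2)
    · exact ⟨(w 0, w 1, w 2, w 3, w 4),
        Finset.mem_filter.mpr ⟨mem_univ _, ⟨⟨⟨a01, a02⟩, a03⟩, a34⟩, hbc⟩, hset1⟩
    · have hne12 : ι (w 1) ≠ ι (w 2) := by
        intro hc
        exact (by decide : (1 : Fin 5) ≠ 2) (winj (hιinj hc))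
      have hbc' : ι (w 2) < ι (w 1) := by omega
      exact ⟨(w 0, w 2, w 1, w 3, w 4),
        Finset.mem_filter.mpr ⟨mem_univ _, ⟨⟨⟨a02, a01⟩, a03⟩, a34⟩, hbc'⟩, hset2⟩
  have stepA : _root_.copyCount G wyeGraph ≤ S.card := by
    unfold _root_.copyCount
    have hFinj : Function.Injective
        (fun x : {s : Finset V // Nonempty (G.induce (s : Set V) ≃g wyeGraph)} =>
          (⟨Classical.choose (hkey x.1 x.2),
            (Classical.choose_spec (hkey x.1 x.2)).1⟩ : {t // t ∈ S})) := by
      intro x y hxy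
      apply Subtype.ext
      have h1 := (Classical.choose_spec (hkey x.1 x.2)).2
      have h2 := (Classical.choose_spec (hkey y.1 y.2)).2
      have h3 : Classical.choose (hkey x.1 x.2) = Classical.choose (hkey y.1 y.2) :=
        congrArg Subtype.val hxy
      rw [← h1, ← h2, h3]
    calc Nat.card {s : Finset V // Nonempty (G.induce (s : Set V) ≃g wyeGraph)}
        ≤ Nat.card {t // t ∈ S} := Nat.card_le_card_of_injective _ hFinj
      _ = S.card := by rw [Nat.card_eq_fintype_card, Fintype.card_coe]
  -- Step B : 2 * S.card ≤ T.card
  have stepB : 2 * S.card ≤ T.card := by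
    set sw : V × V × V × V × V → V × V × V × V × V :=
      fun t => (t.1, t.2.2.1, t.2.1, t.2.2.2.1, t.2.2.2.2) with hswdef
    have hswinj : Function.Injective sw :=
      Function.Involutive.injective (fun t => rfl)
    have hsub : S ⊆ T := by
      intro t ht
      have h' := Finset.mem_filter.mp ht
      exact Finset.mem_filter.mpr ⟨mem_univ _, h'.2.1⟩
    have himg : S.image sw ⊆ T := by
      intro t ht
      obtain ⟨t', ht', rfl⟩ := Finset.mem_image.mp ht
      have h' := (Finset.mem_filter.mp ht').2
      exact Finset.mem_filter.mpr
        ⟨mem_univ _, ⟨⟨h'.1.1.1.2, h'.1.1.1.1⟩, h'.1.1.2⟩, h'.1.2⟩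
    have hdisj : Disjoint S (S.image sw) := by
      rw [Finset.disjoint_left]
      intro t ht htimg
      obtain ⟨t', ht', heq⟩ := Finset.mem_image.mp htimg
      have o1 := (Finset.mem_filter.mp ht).2.2
      have o2 := (Finset.mem_filter.mp ht').2.2
      rw [← heq] at o1
      simp only [hswdef] at o1
      omega
    calc 2 * S.card = S.card + (S.image sw).card := by
          rw [Finset.card_image_of_injective _ hswinj]; ring
      _ = (S ∪ S.image sw).card := (Finset.card_union_of_disjoint hdisj).symm
      _ ≤ T.card := Finset.card_le_card (Finset.union_subset hsub himg)
  -- Step C : combine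
  have hTcard := T_card_eq_aux (G := G) (V := V)
  have hPsum := pair_sum_le_aux hG r
  have hcast : (T.card : ℝ)
      = ∑ q ∈ univ.filter (fun q : V × V => G.Adj q.1 q.2),
          ((G.degree q.1 : ℝ))^2 * (G.degree q.2 : ℝ) := by
    rw [hT, hTcard]
    push_cast
    rfl
  have h2S : (S.card : ℝ) ≤ (T.card : ℝ) / 2 := by
    have : (2 * S.card : ℝ) ≤ (T.card : ℝ) := by exact_mod_cast stepB
    linarith
  calc (_root_.copyCount G wyeGraph : ℝ) ≤ (S.card : ℝ) := by exact_mod_cast stepA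
    _ ≤ (T.card : ℝ) / 2 := h2S
    _ = (1/2) * ∑ q ∈ univ.filter (fun q : V × V => G.Adj q.1 q.2),
          ((G.degree q.1 : ℝ))^2 * (G.degree q.2 : ℝ) := by rw [hcast]; ring
    _ ≤ (1/2) * (4 * ∑ v, (G.degree v : ℝ) ^ (2 + Real.sqrt 3)) := by
        apply mul_le_mul_of_nonneg_left hPsum (by norm_num)
    _ = 2 * ∑ v, (G.degree v : ℝ) ^ (2 + Real.sqrt 3) := by ring
end

section
/- For every ε < 2 + √3 and every constant C > 0, there exists a finite tree T with degree sequence d_1, …, d_n such that Y(T) > C·Σ_{v=1}^n d_v^{ε}. In particular, the exponent 2+√3 in the bound Y(T) ≤ 2·Σ_v d_v^{2+√3} is optimal. -/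
open SimpleGraph Finset

/-- Degree of a vertex, stated without decidability assumptions. -/
noncomputable def deg {V : Type*} (G : SimpleGraph V) (v : V) : ℕ :=
  Nat.card (G.neighborSet v)

/-! ### Acyclicity from a parent function -/

/-- Any walk of positive length to `u` contains a final edge `s(y,u)`. -/
lemma exists_last_edge {V : Type*} {G : SimpleGraph V} {x u : V} (p : G.Walk x u)
    (hp : ¬ p.Nil) : ∃ y, G.Adj y u ∧ s(y, u) ∈ p.edges := by
  induction p with
  | nil => exact absurd SimpleGraph.Walk.nil_nil hp
  | @cons a b c h q ih =>
    by_cases hq : q.Nil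
    · cases q with
      | nil => exact ⟨a, h, by simp⟩
      | cons h' q' => simp at hq
    · obtain ⟨y, hy, hmem⟩ := ih hq
      exact ⟨y, hy, by simp [hmem]⟩

lemma isAcyclic_of_parent {V : Type*} [DecidableEq V] (par : V → Option V) (h : V → ℕ)
    (hpar : ∀ x y, par x = some y → h x = h y + 1)
    (G : SimpleGraph V) (hadj : ∀ x y, G.Adj x y → par x = some y ∨ par y = some x) :
    G.IsAcyclic := by
  intro v c hc
  have hsup : c.support ≠ [] := SimpleGraph.Walk.support_ne_nil c
  obtain ⟨u, hu_mem, hu_max⟩ : ∃ u ∈ c.support, ∀ w ∈ c.support, h w ≤ h u := by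
    classical
    obtain ⟨u, hu, hmax⟩ := Finset.exists_max_image c.support.toFinset h
      (by simpa using List.exists_mem_of_ne_nil _ hsup)
    exact ⟨u, by simpa using hu, fun w hw => hmax w (by simpa using hw)⟩
  set c' := c.rotate u hu_mem with hc'
  have hc'cyc : c'.IsCycle := hc.rotate hu_mem
  have hedges : c'.edges ~r c.edges := SimpleGraph.Walk.rotate_edges c u hu_mem
  have hmemsup : ∀ z w, s(z, w) ∈ c'.edges → z ∈ c.support := by
    intro z w hzw
    exact c.fst_mem_support_of_mem_edges (hedges.mem_iff.mp hzw)
  cases c'' : c' with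
  | nil => exact hc'cyc.ne_nil c''
  | @cons _ x _ hux p =>
    have hpnil : ¬ p.Nil := by
      intro hnil
      have h3 := hc'cyc.three_le_length
      rw [c''] at h3
      simp [SimpleGraph.Walk.nil_iff_length_eq.mp hnil] at h3
    obtain ⟨y, hyu, hymem⟩ := exists_last_edge p hpnil
    have hnodup := hc'cyc.edges_nodup
    rw [c''] at hnodup
    simp only [SimpleGraph.Walk.edges_cons, List.nodup_cons] at hnodup
    have hx_sup : x ∈ c.support := by
      have : s(x, u) ∈ c'.edges := by rw [c'']; simp [Sym2.eq_swap]
      exact hmemsup x u this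
    have hy_sup : y ∈ c.support := by
      have : s(y, u) ∈ c'.edges := by rw [c'']; simp [hymem]
      exact hmemsup y u this
    have hxpar : par u = some x := by
      rcases hadj u x hux with h1 | h1
      · exact h1
      · exfalso; have := hpar x u h1; have := hu_max x hx_sup; omega
    have hypar : par u = some y := by
      rcases hadj y u hyu with h1 | h1
      · exfalso; have := hpar y u h1; have := hu_max y hy_sup; omega
      · exact h1
    have : x = y := by rw [hxpar] at hypar; exact (Option.some_inj.mp hypar)
    subst this
    exact hnodup.1 (by simpa [Sym2.eq_swap] using hymem)

/-! ### Recognizing an induced wye -/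

lemma wye_adj (i j : Fin 5) : wyeGraph.Adj i j ↔
    ((i = 0 ∧ j = 1) ∨ (i = 1 ∧ j = 0) ∨ (i = 0 ∧ j = 2) ∨ (i = 2 ∧ j = 0) ∨
     (i = 0 ∧ j = 3) ∨ (i = 3 ∧ j = 0) ∨ (i = 3 ∧ j = 4) ∨ (i = 4 ∧ j = 3)) := by
  rw [wyeGraph, fromEdgeSet_adj]
  simp only [Set.mem_insert_iff, Set.mem_singleton_iff, Sym2.eq_iff]
  constructor
  · rintro ⟨h, hne⟩
    rcases h with (⟨h1,h2⟩|⟨h1,h2⟩)|(⟨h1,h2⟩|⟨h1,h2⟩)|(⟨h1,h2⟩|⟨h1,h2⟩)|(⟨h1,h2⟩|⟨h1,h2⟩) <;>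
      subst h1 <;> subst h2 <;> simp
  · rintro (⟨rfl,rfl⟩|⟨rfl,rfl⟩|⟨rfl,rfl⟩|⟨rfl,rfl⟩|⟨rfl,rfl⟩|⟨rfl,rfl⟩|⟨rfl,rfl⟩|⟨rfl,rfl⟩) <;>
      exact ⟨by simp, by decide⟩

lemma induce_wye_iso {V : Type*} [DecidableEq V] {G : SimpleGraph V} {v0 v1 v2 v3 v4 : V}
    (d12 : v1 ≠ v2) (d13 : v1 ≠ v3) (d14 : v1 ≠ v4) (d23 : v2 ≠ v3) (d24 : v2 ≠ v4)
    (d04 : v0 ≠ v4)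
    (a01 : G.Adj v0 v1) (a02 : G.Adj v0 v2) (a03 : G.Adj v0 v3) (a34 : G.Adj v3 v4)
    (n12 : ¬G.Adj v1 v2) (n13 : ¬G.Adj v1 v3) (n14 : ¬G.Adj v1 v4) (n23 : ¬G.Adj v2 v3)
    (n24 : ¬G.Adj v2 v4) (n04 : ¬G.Adj v0 v4) :
    Nonempty (G.induce (↑({v0, v1, v2, v3, v4} : Finset V) : Set V) ≃g wyeGraph) := by
  have d01 : v0 ≠ v1 := a01.ne
  have d02 : v0 ≠ v2 := a02.ne
  have d03 : v0 ≠ v3 := a03.ne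
  have d34 : v3 ≠ v4 := a34.ne
  have a10 : G.Adj v1 v0 := a01.symm
  have a20 : G.Adj v2 v0 := a02.symm
  have a30 : G.Adj v3 v0 := a03.symm
  have a43 : G.Adj v4 v3 := a34.symm
  have n21 : ¬G.Adj v2 v1 := fun h => n12 h.symm
  have n31 : ¬G.Adj v3 v1 := fun h => n13 h.symm
  have n41 : ¬G.Adj v4 v1 := fun h => n14 h.symm
  have n32 : ¬G.Adj v3 v2 := fun h => n23 h.symm
  have n42 : ¬G.Adj v4 v2 := fun h => n24 h.symm
  have n40 : ¬G.Adj v4 v0 := fun h => n04 h.symm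
  have hmem : ∀ i : Fin 5,
      (![v0, v1, v2, v3, v4]) i ∈ (↑({v0, v1, v2, v3, v4} : Finset V) : Set V) := by
    intro i; fin_cases i <;> simp
  let f : Fin 5 → (↑(↑({v0, v1, v2, v3, v4} : Finset V) : Set V) : Type _) :=
    fun i => ⟨(![v0, v1, v2, v3, v4]) i, hmem i⟩
  have hbij : Function.Bijective f := by
    constructor
    · intro i j hij
      have hij' : (![v0, v1, v2, v3, v4]) i = (![v0, v1, v2, v3, v4]) j :=
        congrArg Subtype.val hij
      fin_cases i <;> fin_cases j <;> simp_all
    · rintro ⟨x, hx⟩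
      simp only [Finset.coe_insert, Set.mem_insert_iff, Finset.coe_singleton,
        Set.mem_singleton_iff] at hx
      rcases hx with rfl | rfl | rfl | rfl | rfl
      · exact ⟨0, rfl⟩
      · exact ⟨1, rfl⟩
      · exact ⟨2, rfl⟩
      · exact ⟨3, rfl⟩
      · exact ⟨4, rfl⟩
  refine ⟨⟨(Equiv.ofBijective f hbij).symm, ?_⟩⟩
  intro a b
  obtain ⟨i, rfl⟩ := hbij.surjective a
  obtain ⟨j, rfl⟩ := hbij.surjective b
  have hi : (Equiv.ofBijective f hbij).symm (f i) = i :=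
    (Equiv.ofBijective f hbij).symm_apply_apply i
  have hj : (Equiv.ofBijective f hbij).symm (f j) = j :=
    (Equiv.ofBijective f hbij).symm_apply_apply j
  rw [hi, hj]
  have hadj : (G.induce (↑({v0, v1, v2, v3, v4} : Finset V) : Set V)).Adj (f i) (f j) ↔
      G.Adj ((![v0, v1, v2, v3, v4]) i) ((![v0, v1, v2, v3, v4]) j) := Iff.rfl
  rw [hadj]
  fin_cases i <;> fin_cases j <;>
    simp only [wye_adj, Matrix.cons_val_zero, Matrix.cons_val_one, Matrix.head_cons] <;>
    first
      | (refine iff_of_true (by decide) ?_ ; assumption)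
      | (refine iff_of_false (by decide) ?_ ; first | assumption | exact G.loopless.irrefl _)

/-! ### The witness trees -/

abbrev Vtx (d m : ℕ) := Option (Fin d × Option (Fin m))

def par (d m : ℕ) : Vtx d m → Option (Vtx d m)
  | none => none
  | some (_, none) => some none
  | some (i, some _) => some (some (i, none))

def ht (d m : ℕ) : Vtx d m → ℕ
  | none => 0
  | some (_, none) => 1
  | some (_, some _) => 2

lemma hpar (d m : ℕ) : ∀ x y : Vtx d m, par d m x = some y → ht d m x = ht d m y + 1 := by
  rintro (_ | ⟨i, _ | j⟩) y h <;> simp [par] at h <;> subst h <;> rfl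

def TG (d m : ℕ) : SimpleGraph (Vtx d m) where
  Adj x y := par d m x = some y ∨ par d m y = some x
  symm := ⟨fun _ _ h => h.symm⟩
  loopless := ⟨by rintro (_ | ⟨i, _ | j⟩) h <;> simp [par] at h⟩

instance (d m : ℕ) : DecidableRel (TG d m).Adj := fun _ _ =>
  inferInstanceAs (Decidable (_ ∨ _))

lemma adj_root (d m : ℕ) (y : Vtx d m) :
    (TG d m).Adj none y ↔ ∃ i, y = some (i, none) := by
  constructor
  · rintro (h | h)
    · simp [par] at h
    · match y, h with
      | some (i, none), _ => exact ⟨i, rfl⟩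
      | none, h => simp [par] at h
      | some (i, some j), h => simp [par] at h
  · rintro ⟨i, rfl⟩; right; rfl

lemma adj_child (d m : ℕ) (i : Fin d) (y : Vtx d m) :
    (TG d m).Adj (some (i, none)) y ↔ y = none ∨ ∃ j, y = some (i, some j) := by
  constructor
  · rintro (h | h)
    · simp [par] at h; exact Or.inl h.symm
    · match y, h with
      | some (i', some j), h =>
        simp [par] at h
        exact Or.inr ⟨j, by rw [h]⟩
      | none, h => simp [par] at h
      | some (i', none), h => simp [par] at h
  · rintro (rfl | ⟨j, rfl⟩)
    · left; rfl
    · right; rfl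

lemma adj_leaf (d m : ℕ) (i : Fin d) (j : Fin m) (y : Vtx d m) :
    (TG d m).Adj (some (i, some j)) y ↔ y = some (i, none) := by
  constructor
  · rintro (h | h)
    · simp [par] at h; exact h.symm
    · match y, h with
      | none, h => simp [par] at h
      | some (i', none), h => simp [par] at h
      | some (i', some j'), h => simp [par] at h
  · rintro rfl; left; rfl

lemma TG_connected (d m : ℕ) : (TG d m).Connected := by
  rw [connected_iff]
  refine ⟨?_, ⟨none⟩⟩
  have hroot : ∀ v : Vtx d m, (TG d m).Reachable none v := by
    rintro (_ | ⟨i, _ | j⟩)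
    · rfl
    · exact ((adj_root d m _).mpr ⟨i, rfl⟩).reachable
    · exact (((adj_root d m _).mpr ⟨i, rfl⟩).reachable).trans
        (((adj_leaf d m i j _).mpr rfl).symm.reachable)
  exact fun u v => (hroot u).symm.trans (hroot v)

lemma deg_root (d m : ℕ) : deg (TG d m) none = d := by
  have e : (TG d m).neighborSet none ≃ Fin d := by
    refine Equiv.ofBijective (fun x => ?_) ⟨?_, ?_⟩
    · rcases x with ⟨y, hy⟩
      rcases y with _ | ⟨i, o⟩
      · exact absurd hy ((TG d m).loopless.irrefl none)
      · exact i
    · rintro ⟨y1, h1⟩ ⟨y2, h2⟩ hh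
      obtain ⟨i1, rfl⟩ := (adj_root d m _).mp h1
      obtain ⟨i2, rfl⟩ := (adj_root d m _).mp h2
      simp_all
    · intro i
      exact ⟨⟨some (i, none), (adj_root d m _).mpr ⟨i, rfl⟩⟩, rfl⟩
  rw [deg, Nat.card_congr e, Nat.card_eq_fintype_card, Fintype.card_fin]

lemma deg_child (d m : ℕ) (i : Fin d) : deg (TG d m) (some (i, none)) = m + 1 := by
  have e : (TG d m).neighborSet (some (i, none)) ≃ Option (Fin m) := by
    refine Equiv.ofBijective (fun x => ?_) ⟨?_, ?_⟩
    · rcases x with ⟨y, hy⟩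
      rcases y with _ | ⟨i', o⟩
      · exact none
      · rcases o with _ | j
        · exact none
        · exact some j
    · rintro ⟨y1, h1⟩ ⟨y2, h2⟩ hh
      rcases (adj_child d m i _).mp h1 with rfl | ⟨j1, rfl⟩ <;>
        rcases (adj_child d m i _).mp h2 with rfl | ⟨j2, rfl⟩ <;> simp_all
    · rintro (_ | j)
      · exact ⟨⟨none, (adj_child d m i _).mpr (Or.inl rfl)⟩, rfl⟩
      · exact ⟨⟨some (i, some j), (adj_child d m i _).mpr (Or.inr ⟨j, rfl⟩)⟩, rfl⟩
  rw [deg, Nat.card_congr e, Nat.card_eq_fintype_card]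
  simp

lemma deg_leaf (d m : ℕ) (i : Fin d) (j : Fin m) :
    deg (TG d m) (some (i, some j)) = 1 := by
  have e : (TG d m).neighborSet (some (i, some j)) ≃ Fin 1 := by
    refine Equiv.ofBijective (fun _ => 0) ⟨?_, ?_⟩
    · rintro ⟨y1, h1⟩ ⟨y2, h2⟩ _
      have e1 := (adj_leaf d m i j _).mp h1
      have e2 := (adj_leaf d m i j _).mp h2
      exact Subtype.ext (e1.trans e2.symm)
    · intro x
      refine ⟨⟨some (i, none), (adj_leaf d m i j _).mpr rfl⟩, ?_⟩
      omega
  rw [deg, Nat.card_congr e, Nat.card_eq_fintype_card, Fintype.card_fin]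

/-! ### Counting wyes in the witness tree -/

section Count
variable (a b : ℕ)

def cA (c : Fin a) : Fin (3 * a) := ⟨c.1, by omega⟩
def cB (c : Fin a) : Fin (3 * a) := ⟨a + c.1, by omega⟩
def cC (c : Fin a) : Fin (3 * a) := ⟨2 * a + c.1, by omega⟩

lemma cA_ne_cB (c c' : Fin a) : cA a c ≠ cB a c' := by
  intro h; have := congrArg Fin.val h; simp [cA, cB] at this; omega
lemma cA_ne_cC (c c' : Fin a) : cA a c ≠ cC a c' := by
  intro h; have := congrArg Fin.val h; simp [cA, cC] at this; omega
lemma cB_ne_cC (c c' : Fin a) : cB a c ≠ cC a c' := by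
  intro h; have := congrArg Fin.val h; simp [cB, cC] at this; omega

def wyeSet (p : (Fin a × Fin a) × (Fin a × Fin b)) : Finset (Vtx (3 * a) b) :=
  { none,
    some (cA a p.1.1, none),
    some (cB a p.1.2, none),
    some (cC a p.2.1, none),
    some (cC a p.2.1, some p.2.2) }

lemma wyeSet_iso (p : (Fin a × Fin a) × (Fin a × Fin b)) :
    Nonempty ((TG (3 * a) b).induce (↑(wyeSet a b p) : Set (Vtx (3 * a) b))
      ≃g wyeGraph) := by
  obtain ⟨⟨c1, c2⟩, c3, j⟩ := p
  apply induce_wye_iso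
  · simp only [ne_eq, Option.some_inj, Prod.mk.injEq]
    rintro ⟨h, -⟩; exact cA_ne_cB a c1 c2 h
  · simp only [ne_eq, Option.some_inj, Prod.mk.injEq]
    rintro ⟨h, -⟩; exact cA_ne_cC a c1 c3 h
  · simp only [ne_eq, Option.some_inj, Prod.mk.injEq]
    rintro ⟨-, h⟩; simp at h
  · simp only [ne_eq, Option.some_inj, Prod.mk.injEq]
    rintro ⟨h, -⟩; exact cB_ne_cC a c2 c3 h
  · simp only [ne_eq, Option.some_inj, Prod.mk.injEq]
    rintro ⟨-, h⟩; simp at h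
  · simp
  · exact (adj_root _ _ _).mpr ⟨_, rfl⟩
  · exact (adj_root _ _ _).mpr ⟨_, rfl⟩
  · exact (adj_root _ _ _).mpr ⟨_, rfl⟩
  · exact (adj_child _ _ _ _).mpr (Or.inr ⟨_, rfl⟩)
  · rw [adj_child]
    rintro (h | ⟨j', h⟩)
    · simp at h
    · simp only [Option.some_inj, Prod.mk.injEq] at h
      exact cA_ne_cB a c1 c2 h.1.symm
  · rw [adj_child]
    rintro (h | ⟨j', h⟩)
    · simp at h
    · simp only [Option.some_inj, Prod.mk.injEq] at h
      exact cA_ne_cC a c1 c3 h.1.symm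
  · rw [adj_child]
    rintro (h | ⟨j', h⟩)
    · simp at h
    · simp only [Option.some_inj, Prod.mk.injEq] at h
      exact cA_ne_cC a c1 c3 h.1.symm
  · rw [adj_child]
    rintro (h | ⟨j', h⟩)
    · simp at h
    · simp only [Option.some_inj, Prod.mk.injEq] at h
      exact cB_ne_cC a c2 c3 h.1.symm
  · rw [adj_child]
    rintro (h | ⟨j', h⟩)
    · simp at h
    · simp only [Option.some_inj, Prod.mk.injEq] at h
      exact cB_ne_cC a c2 c3 h.1.symm
  · rw [adj_root]
    rintro ⟨i, h⟩
    simp at h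

lemma wyeSet_injective : Function.Injective (wyeSet a b) := by
  rintro ⟨⟨c1, c2⟩, c3, j⟩ ⟨⟨e1, e2⟩, e3, i⟩ h
  have hv1 : (some (cA a c1, none) : Vtx (3*a) b) ∈ wyeSet a b ((e1, e2), e3, i) := by
    rw [← h]; simp [wyeSet]
  have hv2 : (some (cB a c2, none) : Vtx (3*a) b) ∈ wyeSet a b ((e1, e2), e3, i) := by
    rw [← h]; simp [wyeSet]
  have hv4 : (some (cC a c3, some j) : Vtx (3*a) b) ∈ wyeSet a b ((e1, e2), e3, i) := by
    rw [← h]; simp [wyeSet]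
  simp only [wyeSet, Finset.mem_insert, Finset.mem_singleton, Option.some_inj,
    Prod.mk.injEq] at hv1 hv2 hv4
  have h1 : c1 = e1 := by
    rcases hv1 with h | ⟨h1, -⟩ | ⟨h1, -⟩ | ⟨h1, -⟩ | ⟨h1, h2⟩
    · simp at h
    · have := congrArg Fin.val h1; simp [cA] at this; exact Fin.ext this
    · exact absurd h1 (cA_ne_cB a c1 e2)
    · exact absurd h1 (cA_ne_cC a c1 e3)
    · simp at h2
  have h2 : c2 = e2 := by
    rcases hv2 with h | ⟨h1, -⟩ | ⟨h1, -⟩ | ⟨h1, -⟩ | ⟨h1, h2⟩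
    · simp at h
    · exact absurd h1.symm (cA_ne_cB a e1 c2)
    · have := congrArg Fin.val h1; simp [cB] at this; exact Fin.ext this
    · exact absurd h1 (cB_ne_cC a c2 e3)
    · simp at h2
  have h34 : c3 = e3 ∧ j = i := by
    rcases hv4 with h | ⟨-, h2⟩ | ⟨-, h2⟩ | ⟨-, h2⟩ | ⟨h1, h2⟩
    · simp at h
    · simp at h2
    · simp at h2
    · simp at h2
    · have := congrArg Fin.val h1; simp [cC] at this
      exact ⟨Fin.ext this, h2⟩
  rw [h1, h2, h34.1, h34.2]

set_option maxHeartbeats 1000000 in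
lemma count_lower :
    a * a * (a * b) ≤ _root_.copyCount (TG (3*a) b) wyeGraph := by
  classical
  rw [_root_.copyCount]
  have key : Function.Injective (fun p : (Fin a × Fin a) × (Fin a × Fin b) =>
      (⟨wyeSet a b p, wyeSet_iso a b p⟩ : {s : Finset (Vtx (3*a) b) //
        Nonempty (((TG (3*a) b).induce (↑s : Set (Vtx (3*a) b))) ≃g wyeGraph)})) := by
    intro p q h
    exact wyeSet_injective a b (congrArg Subtype.val h)
  have := Nat.card_le_card_of_injective _ key
  simpa [Nat.card_eq_fintype_card, mul_assoc] using this

end Count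

/-! ### Transporting to `Fin n` -/

section Transport
variable {V : Type*} [Fintype V] [DecidableEq V] {n : ℕ} (e : V ≃ Fin n)
  (G : SimpleGraph V)

def Gfin : SimpleGraph (Fin n) := SimpleGraph.comap e.symm G

def GfinIso : Gfin e G ≃g G := ⟨e.symm, Iff.rfl⟩

lemma Gfin_connected (h : G.Connected) : (Gfin e G).Connected := by
  rw [connected_iff] at h ⊢
  refine ⟨fun u v => ?_, ⟨e h.2.some⟩⟩
  have := (h.1 (e.symm u) (e.symm v)).map (GfinIso e G).symm.toHom
  have h2 : ∀ w, ((GfinIso e G).symm.toHom (e.symm w)) = w := fun w => e.apply_symm_apply w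
  rwa [h2 u, h2 v] at this

lemma Gfin_acyclic (h : G.IsAcyclic) : (Gfin e G).IsAcyclic := by
  intro v c hc
  exact h (c.map (GfinIso e G).toHom) (hc.map (GfinIso e G).injective)

lemma Gfin_deg (v : Fin n) : deg (Gfin e G) v = deg G (e.symm v) :=
  Nat.card_congr ((GfinIso e G).mapNeighborSet v)

lemma Gfin_copyCount {k : ℕ} (H : SimpleGraph (Fin k)) :
    _root_.copyCount G H ≤ _root_.copyCount (Gfin e G) H := by
  classical
  have key : ∀ s : Finset V, Nonempty (G.induce (s : Set V) ≃g H) →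
      Nonempty ((Gfin e G).induce ((s.image e : Finset (Fin n)) : Set (Fin n)) ≃g H) := by
    intro s ⟨φ⟩
    have hset : (e.symm '' ((s.image e : Finset (Fin n)) : Set (Fin n))) = (s : Set V) := by
      ext x
      simp only [Finset.coe_image, Set.mem_image, Finset.mem_coe]
      constructor
      · rintro ⟨y, ⟨z, hz, rfl⟩, rfl⟩; simpa using hz
      · intro hx; exact ⟨e x, ⟨x, hx, rfl⟩, by simp⟩
    let ε : ((s.image e : Finset (Fin n)) : Set (Fin n)) ≃ (s : Set V) :=
      (Equiv.image e.symm _).trans (Equiv.setCongr hset)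
    refine ⟨SimpleGraph.Iso.comp φ ⟨ε, ?_⟩⟩
    intro x y
    rfl
  refine Nat.card_le_card_of_injective
    (fun p => ⟨p.1.image e, key p.1 p.2⟩ :
      {s : Finset V // Nonempty (G.induce (s : Set V) ≃g H)} →
      {t : Finset (Fin n) // Nonempty ((Gfin e G).induce (t : Set (Fin n)) ≃g H)}) ?_
  intro p q h
  have : p.1.image e = q.1.image e := congrArg Subtype.val h
  have := Finset.image_injective e.injective this
  exact Subtype.ext this

end Transport

/-! ### The degree sum -/

lemma sum_deg_rpow (d m : ℕ) (t : ℝ) :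
    ∑ v : Vtx d m, (deg (TG d m) v : ℝ) ^ t
      = ((d:ℕ):ℝ)^t + d * (((m+1:ℕ)):ℝ)^t + d * m := by
  have inner : ∀ i : Fin d, ∑ o : Option (Fin m), (deg (TG d m) (some (i, o)) : ℝ)^t
      = (((m+1:ℕ)):ℝ)^t + m := by
    intro i
    rw [Fintype.sum_option, deg_child]
    have leaf : ∀ j : Fin m, (deg (TG d m) (some (i, some j)) : ℝ)^t = 1 := by
      intro j
      rw [deg_leaf]
      simp [Real.one_rpow]
    rw [Finset.sum_congr rfl (fun j _ => leaf j)]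
    simp
  rw [Fintype.sum_option, deg_root, Fintype.sum_prod_type,
    Finset.sum_congr rfl (fun i _ => inner i)]
  simp only [Finset.sum_const, Finset.card_univ, Fintype.card_fin, nsmul_eq_mul]
  ring

/-! ### The analytic part -/

lemma sqrt3_lt2 : Real.sqrt 3 < 2 := by
  nlinarith [Real.sq_sqrt (by norm_num : (3:ℝ) ≥ 0), Real.sqrt_nonneg 3]
lemma one_lt_sqrt3 : 1 < Real.sqrt 3 := by
  nlinarith [Real.sq_sqrt (by norm_num : (3:ℝ) ≥ 0), Real.sqrt_nonneg 3]

set_option maxHeartbeats 1000000 in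
lemma analysis (ε C : ℝ) (hε2 : 2 ≤ ε) (hε : ε < 2 + Real.sqrt 3) (hC : 0 < C) :
    ∃ a b : ℕ, 1 ≤ a ∧ 1 ≤ b ∧
      C * ((3*(a:ℝ))^ε + 3*(a:ℝ)*((b:ℝ)+1)^ε + 3*(a:ℝ)*(b:ℝ)) <
        (a:ℝ)*(a:ℝ)*((a:ℝ)*(b:ℝ)) := by
  have hε4 : ε < 4 := by nlinarith [sqrt3_lt2]
  have hεm1 : (1:ℝ) ≤ ε - 1 := by linarith
  set α : ℝ := (max (ε - 3) 0 + 2/(ε-1))/2 with hα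
  have hdiv : 0 < 2/(ε-1) := by positivity
  have hmax_lt : max (ε - 3) 0 < 2/(ε-1) := by
    rcases le_or_gt ε 3 with h | h
    · rw [max_eq_right (by linarith)]; exact hdiv
    · rw [max_eq_left (by linarith)]
      rw [lt_div_iff₀ (by linarith)]
      nlinarith [Real.sq_sqrt (by norm_num : (3:ℝ) ≥ 0)]
  have hα0 : 0 < α := by
    have : (0:ℝ) ≤ max (ε - 3) 0 := le_max_right _ _
    rw [hα]; positivity
  have hαε : α * (ε - 1) < 2 := by
    have hαlt : α < 2/(ε-1) := by rw [hα]; linarith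
    calc α * (ε - 1) < (2/(ε-1)) * (ε-1) := by
          apply mul_lt_mul_of_pos_right hαlt; linarith
      _ = 2 := by field_simp
  have hε3 : ε < 3 + α := by
    rcases le_or_gt ε 3 with h | h
    · linarith
    · have : ε - 3 < α := by
        rw [hα, max_eq_left (by linarith : (0:ℝ) ≤ ε - 3)] at *
        linarith [hmax_lt]
      linarith
  set δ : ℝ := min (3 + α - ε) (min (2 - α*(ε-1)) 2) with hδ
  have hδ0 : 0 < δ := by
    rw [hδ]; refine lt_min (by linarith) (lt_min (by linarith) (by norm_num))
  have hδ2 : δ ≤ 2 := le_trans (min_le_right _ _) (min_le_right _ _)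
  set K : ℝ := (264*C)^(1/δ) with hK
  set a : ℕ := ⌊max K 1⌋₊ + 1 with ha
  set A : ℝ := (a:ℝ) with hA
  have hA1 : (1:ℝ) < A := by
    rw [hA, ha]
    push_cast
    have : (1:ℕ) ≤ ⌊max K 1⌋₊ := Nat.le_floor (by simp)
    have : (1:ℝ) ≤ (⌊max K 1⌋₊ : ℝ) := by exact_mod_cast this
    linarith
  have hA0 : (0:ℝ) < A := by linarith
  have hAK : K < A := by
    calc K ≤ max K 1 := le_max_left _ _
      _ < (⌊max K 1⌋₊ : ℝ) + 1 := Nat.lt_floor_add_one _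
      _ = A := by rw [hA, ha]; push_cast; ring
  have hAδ : 264*C < A^δ := by
    have h264 : (0:ℝ) < 264*C := by linarith
    have : K^δ = 264*C := by
      rw [hK, ← Real.rpow_mul (le_of_lt h264), one_div,
        inv_mul_cancel₀ (ne_of_gt hδ0), Real.rpow_one]
    rw [← this]
    exact Real.rpow_lt_rpow (Real.rpow_nonneg (le_of_lt h264) _) hAK hδ0
  set b : ℕ := ⌊A^α⌋₊ with hb
  have hAα1 : (1:ℝ) ≤ A^α := Real.one_le_rpow (le_of_lt hA1) (le_of_lt hα0)
  have hb1 : 1 ≤ b := Nat.le_floor (by exact_mod_cast hAα1)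
  refine ⟨a, b, Nat.succ_le_succ (Nat.zero_le _), hb1, ?_⟩
  set B : ℝ := (b:ℝ) with hB
  have hB1 : (1:ℝ) ≤ B := by rw [hB]; exact_mod_cast hb1
  have hBA : B ≤ A^α := Nat.floor_le (by positivity)
  have hAB : A^α ≤ 2*B := by
    have := Nat.lt_floor_add_one (A^α)
    rw [← hb] at this
    linarith
  have hεpos : (0:ℝ) ≤ ε := by linarith
  have t1 : (3*A)^ε ≤ 81 * A^ε := by
    rw [Real.mul_rpow (by norm_num) (le_of_lt hA0)]
    have : (3:ℝ)^ε ≤ (3:ℝ)^(4:ℝ) :=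
      Real.rpow_le_rpow_of_exponent_le (by norm_num) (le_of_lt hε4)
    have h34 : (3:ℝ)^(4:ℝ) = 81 := by
      rw [show (4:ℝ) = ((4:ℕ):ℝ) by norm_num, Real.rpow_natCast]; norm_num
    have hAε : (0:ℝ) ≤ A^ε := Real.rpow_nonneg (le_of_lt hA0) _
    nlinarith
  have t2 : 3*A*(B+1)^ε ≤ 48 * A^(1+α*ε) := by
    have h1 : (B+1)^ε ≤ (2*A^α)^ε := by
      apply Real.rpow_le_rpow (by linarith) (by linarith) hεpos
    have h2 : (2*A^α)^ε = 2^ε * A^(α*ε) := by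
      rw [Real.mul_rpow (by norm_num) (by positivity), ← Real.rpow_mul (le_of_lt hA0)]
    have h3 : (2:ℝ)^ε ≤ 16 := by
      have : (2:ℝ)^ε ≤ (2:ℝ)^(4:ℝ) :=
        Real.rpow_le_rpow_of_exponent_le (by norm_num) (le_of_lt hε4)
      have h24 : (2:ℝ)^(4:ℝ) = 16 := by
        rw [show (4:ℝ) = ((4:ℕ):ℝ) by norm_num, Real.rpow_natCast]; norm_num
      linarith
    have h4 : A^(1+α*ε) = A * A^(α*ε) := by
      rw [Real.rpow_add hA0, Real.rpow_one]
    have hAαε : (0:ℝ) ≤ A^(α*ε) := Real.rpow_nonneg (le_of_lt hA0) _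
    calc 3*A*(B+1)^ε ≤ 3*A*(2^ε * A^(α*ε)) := by
          apply mul_le_mul_of_nonneg_left (h1.trans (le_of_eq h2)) (by positivity)
      _ ≤ 3*A*(16 * A^(α*ε)) := by
          apply mul_le_mul_of_nonneg_left _ (by positivity)
          exact mul_le_mul_of_nonneg_right h3 hAαε
      _ = 48 * A^(1+α*ε) := by rw [h4]; ring
  have t3 : 3*A*B ≤ 3 * A^(1+α) := by
    have h4 : A^(1+α) = A * A^α := by rw [Real.rpow_add hA0, Real.rpow_one]
    rw [h4, show (3:ℝ)*(A*A^α) = 3*A*A^α by ring]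
    apply mul_le_mul_of_nonneg_left hBA (by positivity)
  have hA1' : (1:ℝ) ≤ A := le_of_lt hA1
  have e1 : A^ε ≤ A^(3+α-δ) := by
    apply Real.rpow_le_rpow_of_exponent_le hA1'
    have : δ ≤ 3 + α - ε := min_le_left _ _
    linarith
  have e2 : A^(1+α*ε) ≤ A^(3+α-δ) := by
    apply Real.rpow_le_rpow_of_exponent_le hA1'
    have : δ ≤ 2 - α*(ε-1) := le_trans (min_le_right _ _) (min_le_left _ _)
    nlinarith [hα0]
  have e3 : A^(1+α) ≤ A^(3+α-δ) := by
    apply Real.rpow_le_rpow_of_exponent_le hA1'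
    linarith
  have hRHS : A^(3+α-δ) * A^δ / 2 ≤ A*A*(A*B) := by
    have h5 : A^(3+α-δ) * A^δ = A^(3+α) := by
      rw [← Real.rpow_add hA0]; ring_nf
    have h6 : A^(3+α) = A*A*A*A^α := by
      rw [Real.rpow_add hA0, show (3:ℝ) = ((3:ℕ):ℝ) by norm_num, Real.rpow_natCast]
      ring
    rw [h5, h6]
    have hA3 : (0:ℝ) < A*A*A := by positivity
    calc A*A*A*A^α/2 ≤ A*A*A*(2*B)/2 := by
          apply div_le_div_of_nonneg_right _ (by norm_num)
          exact mul_le_mul_of_nonneg_left hAB (le_of_lt hA3)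
      _ = A*A*(A*B) := by ring
  have hsum : (3*A)^ε + 3*A*(B+1)^ε + 3*A*B ≤ 132 * A^(3+α-δ) := by
    calc (3*A)^ε + 3*A*(B+1)^ε + 3*A*B
        ≤ 81 * A^ε + 48 * A^(1+α*ε) + 3 * A^(1+α) := by linarith
      _ ≤ 81 * A^(3+α-δ) + 48 * A^(3+α-δ) + 3 * A^(3+α-δ) := by nlinarith
      _ = 132 * A^(3+α-δ) := by ring
  have hpos : (0:ℝ) < A^(3+α-δ) := Real.rpow_pos_of_pos hA0 _
  calc C * ((3*A)^ε + 3*A*(B+1)^ε + 3*A*B) ≤ C * (132 * A^(3+α-δ)) := by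
        apply mul_le_mul_of_nonneg_left hsum (le_of_lt hC)
    _ = (264*C) * A^(3+α-δ) / 2 := by ring
    _ < A^δ * A^(3+α-δ) / 2 := by
        have := mul_lt_mul_of_pos_right hAδ hpos
        linarith
    _ = A^(3+α-δ) * A^δ / 2 := by ring
    _ ≤ A*A*(A*B) := hRHS

/-! ### The main theorem -/

set_option maxHeartbeats 1000000 in
theorem exponent_optimal (ε : ℝ) (hε : ε < 2 + Real.sqrt 3) (C : ℝ) (hC : 0 < C) :
    ∃ (n : ℕ) (G : SimpleGraph (Fin n)), G.IsTree ∧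
      C * ∑ v, (deg G v : ℝ) ^ ε < (_root_.copyCount G wyeGraph : ℝ) := by
  classical
  set ε₀ : ℝ := max ε 2 with hε₀def
  have hε₀lt : ε₀ < 2 + Real.sqrt 3 := max_lt hε (by linarith [one_lt_sqrt3])
  obtain ⟨a, b, ha1, hb1, hineq⟩ := analysis ε₀ C (le_max_right _ _) hε₀lt hC
  set Vt := Vtx (3*a) b with hVt
  set n := Fintype.card Vt with hn
  set e : Vt ≃ Fin n := Fintype.equivFin Vt with he
  set G : SimpleGraph (Fin n) := Gfin e (TG (3*a) b) with hG
  refine ⟨n, G, ⟨Gfin_connected e _ (TG_connected _ _),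
    Gfin_acyclic e _ (isAcyclic_of_parent (par (3*a) b) (ht (3*a) b)
      (hpar _ _) _ (fun x y h => h))⟩, ?_⟩
  -- the degree sum
  have hsum_eq : ∑ v : Fin n, (deg G v : ℝ) ^ ε = ∑ v : Vt, (deg (TG (3*a) b) v : ℝ) ^ ε := by
    rw [← Equiv.sum_comp e.symm (fun w => (deg (TG (3*a) b) w : ℝ) ^ ε)]
    refine Finset.sum_congr rfl fun v _ => ?_
    rw [hG, Gfin_deg]
  have hdeg1 : ∀ v : Vt, (1:ℝ) ≤ (deg (TG (3*a) b) v : ℝ) := by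
    rintro (_ | ⟨i, _ | j⟩)
    · rw [deg_root]; exact_mod_cast by omega
    · rw [deg_child]; exact_mod_cast by omega
    · rw [deg_leaf]; norm_num
  have hmono : ∑ v : Vt, (deg (TG (3*a) b) v : ℝ) ^ ε
      ≤ ∑ v : Vt, (deg (TG (3*a) b) v : ℝ) ^ ε₀ := by
    refine Finset.sum_le_sum fun v _ => ?_
    exact Real.rpow_le_rpow_of_exponent_le (hdeg1 v) (le_max_left _ _)
  have hsum₀ : ∑ v : Vt, (deg (TG (3*a) b) v : ℝ) ^ ε₀
      = (3*(a:ℝ))^ε₀ + 3*(a:ℝ)*((b:ℝ)+1)^ε₀ + 3*(a:ℝ)*(b:ℝ) := by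
    rw [sum_deg_rpow (3*a) b ε₀]
    push_cast
    ring
  -- the copy count
  have hcount : (a * a * (a * b) : ℕ) ≤ _root_.copyCount G wyeGraph := by
    refine le_trans (count_lower a b) ?_
    rw [hG]
    exact Gfin_copyCount e _ wyeGraph
  have hcountR : ((a:ℝ) * a * ((a:ℝ) * b)) ≤ (_root_.copyCount G wyeGraph : ℝ) := by
    have := (Nat.cast_le (α := ℝ)).mpr hcount
    push_cast at this
    linarith
  -- combine
  have hC0 : (0:ℝ) ≤ C := le_of_lt hC
  calc C * ∑ v : Fin n, (deg G v : ℝ) ^ ε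
      = C * ∑ v : Vt, (deg (TG (3*a) b) v : ℝ) ^ ε := by rw [hsum_eq]
    _ ≤ C * ∑ v : Vt, (deg (TG (3*a) b) v : ℝ) ^ ε₀ := mul_le_mul_of_nonneg_left hmono hC0
    _ = C * ((3*(a:ℝ))^ε₀ + 3*(a:ℝ)*((b:ℝ)+1)^ε₀ + 3*(a:ℝ)*(b:ℝ)) := by rw [hsum₀]
    _ < (a:ℝ)*(a:ℝ)*((a:ℝ)*(b:ℝ)) := hineq
    _ ≤ (_root_.copyCount G wyeGraph : ℝ) := hcountR
end

section
/- Let T be a rooted tree at vertex r, with all edges oriented away from r, and for each vertex v let A(v) be the set of out-neighbors of v. Then Y(T) = Σ_{v} Σ_{u ∈ A(v)} [ binomial(d(u)−1, 2)(d(v)−1) + binomial(d(v)−1, 2)(d(u)−1) ]. -/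
open SimpleGraph Finset

section WyeAux

lemma wye_adj_iff' : ∀ i j : Fin 5, wyeGraph.Adj i j ↔
    ((i=0∧j=1)∨(i=1∧j=0)∨(i=0∧j=2)∨(i=2∧j=0)∨(i=0∧j=3)∨(i=3∧j=0)∨(i=3∧j=4)∨(i=4∧j=3)) := by
  intro i j
  rw [wyeGraph, fromEdgeSet_adj]
  simp only [Set.mem_insert_iff, Set.mem_singleton_iff, Sym2.eq, Sym2.rel_iff', Prod.mk.injEq,
    Prod.swap_prod_mk]
  fin_cases i <;> fin_cases j <;> decide

variable {V : Type*} {G : SimpleGraph V}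

lemma wye_path_len (hG : G.IsTree) {u v : V} (p : G.Walk u v) (hp : p.IsPath) :
    p.length = G.dist u v := by
  obtain ⟨q, hq, hlen⟩ := (hG.isConnected.preconnected u v).exists_path_of_dist
  obtain ⟨P, _, huniq⟩ := hG.existsUnique_path u v
  rw [huniq p hp, ← huniq q hq, hlen]

lemma wye_dist_adj (hG : G.IsTree) {u v : V} (h : G.Adj u v) : G.dist u v = 1 :=
  (dist_eq_one_iff_adj).2 h

lemma wye_adj_dichotomy [DecidableEq V] (hG : G.IsTree) (r : V) {a b : V} (h : G.Adj a b) :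
    G.dist r b = G.dist r a + 1 ∨ G.dist r a = G.dist r b + 1 := by
  obtain ⟨p, hp, hlen⟩ := (hG.isConnected.preconnected r a).exists_path_of_dist
  by_cases hb : b ∈ p.support
  · right
    have h1 : (p.takeUntil b hb).length = G.dist r b := wye_path_len hG _ (hp.takeUntil hb)
    have h2 : (p.dropUntil b hb).length = G.dist b a := wye_path_len hG _ (hp.dropUntil hb)
    have h3 : G.dist b a = 1 := wye_dist_adj hG h.symm
    have h4 : (p.takeUntil b hb).length + (p.dropUntil b hb).length = p.length := by
      rw [← Walk.length_append, p.take_spec hb]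
    omega
  · left
    have hcp : (p.concat h).IsPath := by
      rw [Walk.isPath_def, Walk.support_concat, List.nodup_append]
      refine ⟨hp.support_nodup, by simp, fun x hx y hy hxy => hb (by simp at hy; subst hy; subst hxy; exact hx)⟩
    have := wye_path_len hG _ hcp
    rw [Walk.length_concat] at this
    omega

lemma wye_no_tri (hG : G.IsTree) {a b c : V} (hab : G.Adj a b) (hbc : G.Adj b c)
    (hac : a ≠ c) : ¬ G.Adj a c := by
  intro h
  have hp : (Walk.cons hab (Walk.cons hbc Walk.nil)).IsPath := by
    rw [Walk.isPath_def]; simp [hab.ne, hbc.ne, hac]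
  have := wye_path_len hG _ hp
  rw [wye_dist_adj hG h] at this
  simp [Walk.length_cons] at this

lemma wye_no_sq (hG : G.IsTree) {a b c d : V} (hab : G.Adj a b) (hbc : G.Adj b c)
    (hcd : G.Adj c d) (hac : a ≠ c) (hbd : b ≠ d) (had : a ≠ d) : ¬ G.Adj a d := by
  intro h
  have hp : (Walk.cons hab (Walk.cons hbc (Walk.cons hcd Walk.nil))).IsPath := by
    rw [Walk.isPath_def]; simp [hab.ne, hbc.ne, hcd.ne, hac, hbd, had]
  have := wye_path_len hG _ hp
  rw [wye_dist_adj hG h] at this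
  simp [Walk.length_cons] at this

/-- Derived distinctness and non-adjacency facts for a wye configuration. -/
lemma wye_derived (hG : G.IsTree) {a x y b w : V}
    (hab : G.Adj a b) (hax : G.Adj a x) (hay : G.Adj a y) (hbw : G.Adj b w)
    (hxy : x ≠ y) (hxb : x ≠ b) (hyb : y ≠ b) (hwa : w ≠ a) :
    x ≠ w ∧ y ≠ w ∧ ¬ G.Adj x y ∧ ¬ G.Adj x b ∧ ¬ G.Adj y b ∧ ¬ G.Adj a w ∧
      ¬ G.Adj x w ∧ ¬ G.Adj y w := by
  have nxb : ¬ G.Adj x b := wye_no_tri hG hax.symm hab hxb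
  have nyb : ¬ G.Adj y b := wye_no_tri hG hay.symm hab hyb
  have nxy : ¬ G.Adj x y := wye_no_tri hG hax.symm hay hxy
  have naw : ¬ G.Adj a w := wye_no_tri hG hab hbw hwa.symm
  have hxw : x ≠ w := fun h => nxb (by rw [h]; exact hbw.symm)
  have hyw : y ≠ w := fun h => nyb (by rw [h]; exact hbw.symm)
  have nxw : ¬ G.Adj x w := wye_no_sq hG hax.symm hab hbw hxb hwa.symm hxw
  have nyw : ¬ G.Adj y w := wye_no_sq hG hay.symm hab hbw hyb hwa.symm hyw
  exact ⟨hxw, hyw, nxy, nxb, nyb, naw, nxw, nyw⟩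

variable [DecidableEq V]

lemma wye_iso_of (hG : G.IsTree) {a x y b w : V}
    (hab : G.Adj a b) (hax : G.Adj a x) (hay : G.Adj a y) (hbw : G.Adj b w)
    (hxy : x ≠ y) (hxb : x ≠ b) (hyb : y ≠ b) (hwa : w ≠ a) :
    Nonempty ((G.induce ((↑({a,x,y,b,w} : Finset V)) : Set V)) ≃g wyeGraph) := by
  obtain ⟨hxw, hyw, nxy, nxb, nyb, naw, nxw, nyw⟩ :=
    wye_derived hG hab hax hay hbw hxy hxb hyb hwa
  have nyx : ¬ G.Adj y x := fun h => nxy h.symm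
  have nbx : ¬ G.Adj b x := fun h => nxb h.symm
  have nby : ¬ G.Adj b y := fun h => nyb h.symm
  have nwa : ¬ G.Adj w a := fun h => naw h.symm
  have nwx : ¬ G.Adj w x := fun h => nxw h.symm
  have nwy : ¬ G.Adj w y := fun h => nyw h.symm
  have hmem : ∀ i : Fin 5, (![a,x,y,b,w] i) ∈ ((↑({a,x,y,b,w} : Finset V)) : Set V) := by
    intro i; fin_cases i <;> simp
  refine ⟨⟨⟨fun v => if (v:V) = a then 0 else if (v:V) = x then 1 else if (v:V) = y then 2
      else if (v:V) = b then 3 else 4,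
    fun i => ⟨![a,x,y,b,w] i, hmem i⟩, ?_, ?_⟩, ?_⟩⟩
  · rintro ⟨v, hv⟩
    simp only [Finset.coe_insert, Set.mem_insert_iff, Finset.coe_singleton,
      Set.mem_singleton_iff] at hv
    rcases hv with rfl|rfl|rfl|rfl|rfl <;>
      simp [hax.ne', hay.ne', hab.ne', hxy, hxb, hyb, hwa, hbw.ne', hxw, hyw, hxy.symm,
        hxw.symm, hyw.symm, hxb.symm, hyb.symm, hwa.symm, hab.ne, hax.ne, hay.ne, hbw.ne]
  · intro i
    fin_cases i <;>
      simp [hax.ne', hay.ne', hab.ne', hxy, hxb, hyb, hwa, hbw.ne', hxw, hyw, hxy.symm,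
        hxw.symm, hyw.symm, hxb.symm, hyb.symm, hwa.symm, hab.ne, hax.ne, hay.ne, hbw.ne]
  · rintro ⟨u, hu⟩ ⟨v, hv⟩
    simp only [Finset.coe_insert, Set.mem_insert_iff, Finset.coe_singleton,
      Set.mem_singleton_iff] at hu hv
    simp only [Equiv.coe_fn_mk, comap_adj, Function.Embedding.coe_subtype]
    rcases hu with rfl|rfl|rfl|rfl|rfl <;> rcases hv with rfl|rfl|rfl|rfl|rfl <;>
      simp [wye_adj_iff', hax.ne', hay.ne', hab.ne', hxy, hxb, hyb, hwa, hbw.ne', hxw, hyw,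
        hxy.symm, hxw.symm, hyw.symm, hxb.symm, hyb.symm, hwa.symm, hab.ne, hax.ne, hay.ne,
        hbw.ne, hab, hax, hay, hbw, hab.symm, hax.symm, hay.symm, hbw.symm,
        nxy, nxb, nyb, naw, nxw, nyw, nyx, nbx, nby, nwa, nwx, nwy]

lemma wye_extract {s : Finset V} (h : Nonempty ((G.induce ((↑s) : Set V)) ≃g wyeGraph)) :
    ∃ a x y b w : V, s = {a,x,y,b,w} ∧ G.Adj a b ∧ G.Adj a x ∧ G.Adj a y ∧ G.Adj b w ∧
      x ≠ y ∧ x ≠ b ∧ y ≠ b ∧ w ≠ a := by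
  obtain ⟨e⟩ := h
  set m : Fin 5 → V := fun i => ((e.symm i : ↥((↑s) : Set V)) : V) with hm
  have hadj : ∀ i j, G.Adj (m i) (m j) ↔ wyeGraph.Adj i j := by
    intro i j
    have h2 := e.symm.map_rel_iff (a := i) (b := j)
    simpa [comap_adj, Function.Embedding.coe_subtype] using h2
  have hinj : Function.Injective m := by
    intro i j hij
    exact e.symm.toEquiv.injective (Subtype.ext hij)
  have hs : s = {m 0, m 1, m 2, m 3, m 4} := by
    ext v
    simp only [Finset.mem_insert, Finset.mem_singleton]
    constructor
    · intro hv
      have hv' : v ∈ ((↑s) : Set V) := hv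
      have : v = m (e ⟨v, hv'⟩) := by
        simp only [hm]
        have := RelIso.symm_apply_apply e (⟨v, hv'⟩ : ↥((↑s) : Set V))
        rw [this]
      have h5 : ∀ i : Fin 5, i = 0 ∨ i = 1 ∨ i = 2 ∨ i = 3 ∨ i = 4 := by decide
      rcases h5 (e ⟨v, hv'⟩) with h'|h'|h'|h'|h' <;> rw [h'] at this <;> tauto
    · have hms : ∀ i : Fin 5, m i ∈ s := fun i => (e.symm i).2
      rintro (rfl|rfl|rfl|rfl|rfl) <;> exact hms _
  refine ⟨m 0, m 1, m 2, m 3, m 4, hs, ?_, ?_, ?_, ?_, ?_, ?_, ?_, ?_⟩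
  · exact (hadj 0 3).2 (by rw [wye_adj_iff']; decide)
  · exact (hadj 0 1).2 (by rw [wye_adj_iff']; decide)
  · exact (hadj 0 2).2 (by rw [wye_adj_iff']; decide)
  · exact (hadj 3 4).2 (by rw [wye_adj_iff']; decide)
  · exact hinj.ne (by decide)
  · exact hinj.ne (by decide)
  · exact hinj.ne (by decide)
  · exact hinj.ne (by decide)

lemma wye_recover [DecidableRel G.Adj] (hG : G.IsTree) {a x y b w : V}
    (hab : G.Adj a b) (hax : G.Adj a x) (hay : G.Adj a y) (hbw : G.Adj b w)
    (hxy : x ≠ y) (hxb : x ≠ b) (hyb : y ≠ b) (hwa : w ≠ a) :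
    ({a,x,y,b,w} : Finset V).filter (G.Adj a) = {x,y,b} ∧
    ({a,x,y,b,w} : Finset V).filter (G.Adj b) = {a,w} ∧
    ({a,x,y,b,w} : Finset V).filter (G.Adj x) = {a} ∧
    ({a,x,y,b,w} : Finset V).filter (G.Adj y) = {a} ∧
    ({a,x,y,b,w} : Finset V).filter (G.Adj w) = {b} := by
  obtain ⟨hxw, hyw, nxy, nxb, nyb, naw, nxw, nyw⟩ :=
    wye_derived hG hab hax hay hbw hxy hxb hyb hwa
  have nyx : ¬ G.Adj y x := fun h => nxy h.symm
  have nbx : ¬ G.Adj b x := fun h => nxb h.symm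
  have nby : ¬ G.Adj b y := fun h => nyb h.symm
  have nwa : ¬ G.Adj w a := fun h => naw h.symm
  have nwx : ¬ G.Adj w x := fun h => nxw h.symm
  have nwy : ¬ G.Adj w y := fun h => nyw h.symm
  refine ⟨?_, ?_, ?_, ?_, ?_⟩ <;>
    simp [Finset.filter_insert, Finset.filter_singleton, hab, hax, hay, hbw, hab.symm, hax.symm,
      hay.symm, hbw.symm, nxy, nxb, nyb, naw, nxw, nyw, nyx, nbx, nby, nwa, nwx, nwy,
      SimpleGraph.irrefl]

end WyeAux

theorem wye_count_oriented {V : Type*} [Fintype V] [DecidableEq V] (G : SimpleGraph V)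
    [DecidableRel G.Adj] (hG : G.IsTree) (r : V) :
    _root_.copyCount G wyeGraph =
      ∑ v, ∑ u ∈ Finset.univ.filter (fun u => G.Adj v u ∧ G.dist r u = G.dist r v + 1),
        ((G.degree u - 1).choose 2 * (G.degree v - 1) +
          (G.degree v - 1).choose 2 * (G.degree u - 1)) := by
  letI : DecidablePred (fun s : Finset V => Nonempty ((G.induce ((↑s) : Set V)) ≃g wyeGraph)) :=
    fun _ => Classical.dec _
  have hcard : _root_.copyCount G wyeGraph =
      (univ.filter (fun s : Finset V =>
        Nonempty ((G.induce ((↑s) : Set V)) ≃g wyeGraph))).card := by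
    rw [_root_.copyCount, Nat.card_eq_fintype_card, Fintype.card_subtype]
  set E : Finset (V × V) := univ.filter (fun ab : V × V => G.Adj ab.1 ab.2) with hE
  set W : V × V → Finset (V × Finset V) := fun ab =>
    ((G.neighborFinset ab.2).erase ab.1) ×ˢ (((G.neighborFinset ab.1).erase ab.2).powersetCard 2)
    with hW
  have hQS : (E.sigma W).card =
      (univ.filter (fun s : Finset V =>
        Nonempty ((G.induce ((↑s) : Set V)) ≃g wyeGraph))).card := by
    apply Finset.card_bij (fun t _ => insert t.1.1 (insert t.1.2 (insert t.2.1 t.2.2)))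
    · rintro ⟨⟨a,b⟩,w,p⟩ ht
      simp only [hE, hW, mem_sigma, mem_filter, mem_univ, true_and, mem_product, mem_erase,
        mem_neighborFinset, mem_powersetCard] at ht
      obtain ⟨hab, ⟨⟨hwa, hbw⟩, hpsub, hpcard⟩⟩ := ht
      obtain ⟨x, y, hxy, rfl⟩ := Finset.card_eq_two.1 hpcard
      obtain ⟨hxb, hax⟩ := Finset.mem_erase.1 (hpsub (Finset.mem_insert_self _ _))
      obtain ⟨hyb, hay⟩ := Finset.mem_erase.1
        (hpsub (Finset.mem_insert_of_mem (Finset.mem_singleton_self _)))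
      rw [mem_neighborFinset] at hax hay
      have hset : insert a (insert b (insert w ({x,y} : Finset V))) = ({a,x,y,b,w} : Finset V) := by
        ext v; simp only [mem_insert, mem_singleton]; tauto
      rw [mem_filter]
      refine ⟨mem_univ _, ?_⟩
      rw [hset]
      exact wye_iso_of hG hab hax hay hbw hxy hxb hyb hwa
    · rintro ⟨⟨a₁,b₁⟩,w₁,p₁⟩ ht₁ ⟨⟨a₂,b₂⟩,w₂,p₂⟩ ht₂ heq
      simp only [hE, hW, mem_sigma, mem_filter, mem_univ, true_and, mem_product, mem_erase,
        mem_neighborFinset, mem_powersetCard] at ht₁ ht₂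
      obtain ⟨hab₁, ⟨⟨hwa₁, hbw₁⟩, hpsub₁, hpcard₁⟩⟩ := ht₁
      obtain ⟨x₁, y₁, hxy₁, rfl⟩ := Finset.card_eq_two.1 hpcard₁
      obtain ⟨hxb₁, hax₁⟩ := Finset.mem_erase.1 (hpsub₁ (Finset.mem_insert_self _ _))
      obtain ⟨hyb₁, hay₁⟩ := Finset.mem_erase.1
        (hpsub₁ (Finset.mem_insert_of_mem (Finset.mem_singleton_self _)))
      rw [mem_neighborFinset] at hax₁ hay₁
      obtain ⟨hab₂, ⟨⟨hwa₂, hbw₂⟩, hpsub₂, hpcard₂⟩⟩ := ht₂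
      obtain ⟨x₂, y₂, hxy₂, rfl⟩ := Finset.card_eq_two.1 hpcard₂
      obtain ⟨hxb₂, hax₂⟩ := Finset.mem_erase.1 (hpsub₂ (Finset.mem_insert_self _ _))
      obtain ⟨hyb₂, hay₂⟩ := Finset.mem_erase.1
        (hpsub₂ (Finset.mem_insert_of_mem (Finset.mem_singleton_self _)))
      rw [mem_neighborFinset] at hax₂ hay₂
      simp only at heq
      set s : Finset V := insert a₁ (insert b₁ (insert w₁ ({x₁,y₁} : Finset V))) with hsdef
      have hs₁ : s = ({a₁,x₁,y₁,b₁,w₁} : Finset V) := by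
        ext v; simp only [hsdef, mem_insert, mem_singleton]; tauto
      have hs₂ : s = ({a₂,x₂,y₂,b₂,w₂} : Finset V) := by
        rw [heq]; ext v; simp only [mem_insert, mem_singleton]; tauto
      obtain ⟨Ra₁, Rb₁, Rx₁, Ry₁, Rw₁⟩ := wye_recover hG hab₁ hax₁ hay₁ hbw₁ hxy₁ hxb₁ hyb₁ hwa₁
      obtain ⟨Ra₂, Rb₂, Rx₂, Ry₂, Rw₂⟩ := wye_recover hG hab₂ hax₂ hay₂ hbw₂ hxy₂ hxb₂ hyb₂ hwa₂
      have hc3 : ({x₁,y₁,b₁} : Finset V).card = 3 := by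
        rw [card_insert_of_notMem (by simp [hxy₁, hxb₁]),
          card_insert_of_notMem (by simp [hyb₁]), card_singleton]
      have hc2 : ({a₁,w₁} : Finset V).card = 2 := by
        rw [card_insert_of_notMem (by simp [Ne.symm hwa₁]), card_singleton]
      -- a₂ = a₁
      have ha2mem : a₂ ∈ ({a₁,x₁,y₁,b₁,w₁} : Finset V) := by
        rw [← hs₁, hs₂]; simp
      have hfa₂ : (({a₁,x₁,y₁,b₁,w₁} : Finset V).filter (G.Adj a₂)).card = 3 := by
        rw [← hs₁, hs₂, Ra₂, card_insert_of_notMem (by simp [hxy₂, hxb₂]),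
          card_insert_of_notMem (by simp [hyb₂]), card_singleton]
      have haa : a₂ = a₁ := by
        simp only [mem_insert, mem_singleton] at ha2mem
        rcases ha2mem with h|h|h|h|h
        · exact h
        · exfalso; rw [h, Rx₁, card_singleton] at hfa₂; omega
        · exfalso; rw [h, Ry₁, card_singleton] at hfa₂; omega
        · exfalso; rw [h, Rb₁, hc2] at hfa₂; omega
        · exfalso; rw [h, Rw₁, card_singleton] at hfa₂; omega
      have hb2mem : b₂ ∈ ({a₁,x₁,y₁,b₁,w₁} : Finset V) := by
        rw [← hs₁, hs₂]; simp
      have hfb₂ : (({a₁,x₁,y₁,b₁,w₁} : Finset V).filter (G.Adj b₂)).card = 2 := by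
        rw [← hs₁, hs₂, Rb₂, card_insert_of_notMem (by simp [Ne.symm hwa₂]), card_singleton]
      have hbb : b₂ = b₁ := by
        simp only [mem_insert, mem_singleton] at hb2mem
        rcases hb2mem with h|h|h|h|h
        · exfalso; rw [h, Ra₁, hc3] at hfb₂; omega
        · exfalso; rw [h, Rx₁, card_singleton] at hfb₂; omega
        · exfalso; rw [h, Ry₁, card_singleton] at hfb₂; omega
        · exact h
        · exfalso; rw [h, Rw₁, card_singleton] at hfb₂; omega
      have hww : w₂ = w₁ := by
        have hw2 : w₂ ∈ ({a₁,x₁,y₁,b₁,w₁} : Finset V).filter (G.Adj b₁) := by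
          rw [mem_filter]
          refine ⟨by rw [← hs₁, hs₂]; simp, ?_⟩
          rw [← hbb]; exact hbw₂
        rw [Rb₁, mem_insert, mem_singleton] at hw2
        rcases hw2 with h|h
        · exact absurd (h.trans haa.symm) hwa₂
        · exact h
      have hx2 : x₂ = x₁ ∨ x₂ = y₁ := by
        have hx : x₂ ∈ ({a₁,x₁,y₁,b₁,w₁} : Finset V).filter (G.Adj a₁) := by
          rw [mem_filter]
          refine ⟨by rw [← hs₁, hs₂]; simp, ?_⟩
          rw [← haa]; exact hax₂
        rw [Ra₁, mem_insert, mem_insert, mem_singleton] at hx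
        rcases hx with h|h|h
        · exact Or.inl h
        · exact Or.inr h
        · exact absurd (h.trans hbb.symm) hxb₂
      have hy2 : y₂ = x₁ ∨ y₂ = y₁ := by
        have hy : y₂ ∈ ({a₁,x₁,y₁,b₁,w₁} : Finset V).filter (G.Adj a₁) := by
          rw [mem_filter]
          refine ⟨by rw [← hs₁, hs₂]; simp, ?_⟩
          rw [← haa]; exact hay₂
        rw [Ra₁, mem_insert, mem_insert, mem_singleton] at hy
        rcases hy with h|h|h
        · exact Or.inl h
        · exact Or.inr h
        · exact absurd (h.trans hbb.symm) hyb₂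
      have hpair : ({x₂,y₂} : Finset V) = {x₁,y₁} := by
        rcases hx2 with h1|h1 <;> rcases hy2 with h2|h2
        · exact absurd (h1.trans h2.symm) hxy₂
        · rw [h1, h2]
        · rw [h1, h2, Finset.pair_comm]
        · exact absurd (h1.trans h2.symm) hxy₂
      subst haa; subst hbb; subst hww
      rw [hpair]
    · intro s hs
      rw [mem_filter] at hs
      obtain ⟨a, x, y, b, w, rfl, hab, hax, hay, hbw, hxy, hxb, hyb, hwa⟩ := wye_extract hs.2
      refine ⟨⟨(a,b),(w,({x,y} : Finset V))⟩, ?_, ?_⟩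
      · simp only [hE, hW, mem_sigma, mem_filter, mem_univ, true_and, mem_product, mem_erase,
          mem_neighborFinset, mem_powersetCard]
        refine ⟨hab, ⟨⟨hwa, hbw⟩, ?_, ?_⟩⟩
        · intro v hv
          simp only [mem_insert, mem_singleton] at hv
          rcases hv with rfl|rfl
          · exact Finset.mem_erase.2 ⟨hxb, (mem_neighborFinset _ _ _).2 hax⟩
          · exact Finset.mem_erase.2 ⟨hyb, (mem_neighborFinset _ _ _).2 hay⟩
        · rw [card_insert_of_notMem (by simp [hxy]), card_singleton]
      · ext v; simp only [mem_insert, mem_singleton]; tauto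
  rw [hcard, ← hQS, Finset.card_sigma]
  have hWcard : ∀ ab ∈ E, (W ab).card =
      (G.degree ab.2 - 1) * ((G.degree ab.1 - 1).choose 2) := by
    rintro ⟨a,b⟩ hab
    rw [hE, mem_filter] at hab
    simp only [hW]
    rw [Finset.card_product, Finset.card_powersetCard,
      Finset.card_erase_of_mem ((mem_neighborFinset _ _ _).2 hab.2.symm),
      Finset.card_erase_of_mem ((mem_neighborFinset _ _ _).2 hab.2),
      card_neighborFinset_eq_degree, card_neighborFinset_eq_degree]
  rw [Finset.sum_congr rfl hWcard]
  set D : Finset (V × V) := univ.filter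
    (fun p : V × V => G.Adj p.1 p.2 ∧ G.dist r p.2 = G.dist r p.1 + 1) with hD
  have hED : E = D ∪ D.image Prod.swap := by
    ext ⟨u,v⟩
    simp only [hE, hD, mem_filter, mem_univ, true_and, mem_union, mem_image, Prod.exists,
      Prod.swap_prod_mk, Prod.mk.injEq]
    constructor
    · intro h
      rcases wye_adj_dichotomy hG r h with hd|hd
      · exact Or.inl ⟨h, hd⟩
      · exact Or.inr ⟨v, u, ⟨h.symm, hd⟩, rfl, rfl⟩
    · rintro (⟨h, _⟩ | ⟨p, q, ⟨h, _⟩, rfl, rfl⟩)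
      · exact h
      · exact h.symm
  have hdisj : Disjoint D (D.image Prod.swap) := by
    rw [Finset.disjoint_left]
    rintro ⟨u,v⟩ h1 h2
    simp only [hD, mem_filter, mem_univ, true_and, mem_image, Prod.exists, Prod.swap_prod_mk,
      Prod.mk.injEq] at h1 h2
    obtain ⟨p, q, ⟨_, hd2⟩, rfl, rfl⟩ := h2
    omega
  rw [hED, Finset.sum_union hdisj, Finset.sum_image (fun x _ y _ h => Prod.swap_injective h),
    ← Finset.sum_add_distrib, hD, Finset.sum_filter, ← Finset.univ_product_univ,
    Finset.sum_product]
  refine Finset.sum_congr rfl fun v _ => ?_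
  rw [Finset.sum_filter]
  refine Finset.sum_congr rfl fun u _ => ?_
  split
  · simp only [Prod.swap_prod_mk]
    ring
  · rfl
end
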